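/- For a prime p, the determinant of the matrix with rows (1,1,1), (x+ap, y+bp, z+cp), (px²+ip², py²+jp², pz²+kp²) is congruent to -p(x-y)(x-z)(y-z) modulo p², for any integers x,y,z,a,b,c,i,j,k. -/

import Mathlib

/-- Three points are "in a line" on a discrete torus (abelian group) `G` if they lie in a
common coset of a cyclic subgroup of `G`. `S` has no three in a line if no three distinct
elements of `S` lie in such a coset. -/
def NoThreeInLine {G : Type*} [AddCommGroup G] (S : Set G) : Prop :=
  ∀ a ∈ S, ∀ b ∈ S, ∀ c ∈ S, a ≠ b → a ≠ c → b ≠ c →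
    ¬ ∃ g h : G, a - g ∈ AddSubgroup.zmultiples h ∧ b - g ∈ AddSubgroup.zmultiples h ∧
      c - g ∈ AddSubgroup.zmultiples h

/-- `T G` is the maximum size of a subset of `G` with no three elements in a common coset
of a cyclic subgroup. -/
noncomputable def T (G : Type*) [AddCommGroup G] : ℕ :=
  sSup {n | ∃ S : Set G, S.Finite ∧ S.ncard = n ∧ NoThreeInLine S}

/-- A subgroup is a maximal cyclic subgroup if it is cyclic and maximal with respect to
inclusion among cyclic subgroups. -/
def IsMaximalCyclic {G : Type*} [AddCommGroup G] (H : AddSubgroup G) : Prop :=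
  (∃ g, H = AddSubgroup.zmultiples g) ∧
  ∀ K : AddSubgroup G, (∃ g, K = AddSubgroup.zmultiples g) → H ≤ K → H = K

theorem stmt8 (p : ℕ) (hp : p.Prime) (x y z a b c i j k : ℤ) :
    Matrix.det !![1, 1, 1;
                  x + a * p, y + b * p, z + c * p;
                  p * x ^ 2 + i * p ^ 2, p * y ^ 2 + j * p ^ 2, p * z ^ 2 + k * p ^ 2] ≡
      -(p : ℤ) * (x - y) * (x - z) * (y - z) [ZMOD (p : ℤ) ^ 2] := by
  have hdet : Matrix.det !![(1:ℤ), 1, 1;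
      x + a * p, y + b * p, z + c * p;
      p * x ^ 2 + i * p ^ 2, p * y ^ 2 + j * p ^ 2, p * z ^ 2 + k * p ^ 2] =
      1 * ((y + b*p) * (p*z^2 + k*p^2) - (z + c*p) * (p*y^2 + j*p^2))
      - 1 * ((x + a*p) * (p*z^2 + k*p^2) - (z + c*p) * (p*x^2 + i*p^2))
      + 1 * ((x + a*p) * (p*y^2 + j*p^2) - (y + b*p) * (p*x^2 + i*p^2)) := by
    rw [Matrix.det_fin_three]; simp; ring
  rw [hdet]
  exact (Int.modEq_iff_dvd.mpr ⟨-((y*k + b*z^2 + b*k*p) - (z*j + c*y^2 + c*j*p)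
    - (x*k + a*z^2 + a*k*p) + (z*i + c*x^2 + c*i*p) + (x*j + a*y^2 + a*j*p)
    - (y*i + b*x^2 + b*i*p)), by ring⟩)
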